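/- Let C be a finitary extensive category with finite limits in which Dec(C) → C is detached (reflective, closed under finite coproducts and subobjects, with finite-product-preserving reflector). Then Dec(C) is the least detached full subcategory of C: every detached full subcategory S → C contains all decidable objects of C (equivalently, Dec(C) factors through S). -/

import Mathlib

open CategoryTheory CategoryTheory.Limits

/-- A morphism `i : X ⟶ Z` is a (binary coproduct) summand if there is a morphism
`j : Y ⟶ Z` such that the cospan `X ⟶ Z ⟵ Y` is a coproduct cocone. -/
def IsSummand {C : Type*} [Category C] {X Z : C} (i : X ⟶ Z) : Prop :=
  ∃ (Y : C) (j : Y ⟶ Z), Nonempty (IsColimit (BinaryCofan.mk i j))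

/-- An object `X` is decidable if its diagonal `X ⟶ X ⨯ X` is a coproduct summand. -/
noncomputable def IsDecidableObj {C : Type*} [Category C] [HasBinaryProducts C] (X : C) : Prop :=
  IsSummand (diag X)
/-- If the subcategory of decidable objects of a finitary extensive category `C` with
finite limits is detached, then it is the least detached subcategory: every detached full
reflective subcategory `R : S ⥤ C` (closed under finite coproducts and subobjects, with a
finite-product preserving reflector `L`) contains every decidable object of `C` up to
isomorphism. -/
theorem dec_least_detached
    {C : Type*} [Category C] [FinitaryExtensive C] [HasFiniteLimits C]
    -- `Dec C ⥤ C` is detached: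
    (Ldec : C ⥤ ObjectProperty.FullSubcategory (fun X : C => IsDecidableObj X))
    (adjdec : Ldec ⊣ ObjectProperty.ι (fun X : C => IsDecidableObj X))
    [PreservesFiniteProducts Ldec]
    (hsubdec : ∀ (B : ObjectProperty.FullSubcategory (fun X : C => IsDecidableObj X)) (X : C)
      (m : X ⟶ (ObjectProperty.ι _).obj B), Mono m → IsIso (adjdec.unit.app X))
    -- an arbitrary detached full reflective subcategory `R : S ⥤ C`:
    {S : Type*} [Category S] (R : S ⥤ C) [R.Full] [R.Faithful]
    [PreservesFiniteCoproducts R]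
    (L : C ⥤ S) (adj : L ⊣ R) [PreservesFiniteProducts L]
    (hsub : ∀ (B : S) (X : C) (m : X ⟶ R.obj B), Mono m → IsIso (adj.unit.app X)) :
    ∀ X : C, IsDecidableObj X → ∃ B : S, Nonempty (X ≅ R.obj B) := by
  intro X hX
  obtain ⟨N, ν, ⟨hc⟩⟩ := hX
  haveI : PreservesColimitsOfSize L := adj.leftAdjoint_preservesColimits
  haveI : PreservesLimitsOfSize R := adj.rightAdjoint_preservesLimits
  -- it suffices to show the unit at `X` is mono
  have hmono : Mono (adj.unit.app X) := by
    constructor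
    intro W g h hgh
    set p : W ⟶ X ⨯ X := prod.lift g h with hp
    -- the image of the coproduct decomposition of `X ⨯ X` under `L ⋙ R`
    have hc' : IsColimit (BinaryCofan.mk ((L ⋙ R).map (diag X)) ((L ⋙ R).map ν)) :=
      mapIsColimitOfPreservesOfIsColimit (L ⋙ R) _ _ hc
    have hdisj := FinitaryExtensive.isPullback_initial_to_binaryCofan hc'
    -- `L ⋙ R` preserves the product `X ⨯ X`
    have hlim : IsLimit (BinaryFan.mk ((L ⋙ R).map (prod.fst : X ⨯ X ⟶ X))
        ((L ⋙ R).map (prod.snd : X ⨯ X ⟶ X))) :=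
      mapIsLimitOfPreservesOfIsLimit (L ⋙ R) _ _ (prodIsProd X X)
    -- key equality: `p ≫ η = (g ≫ diag X) ≫ η`
    have hkey : p ≫ adj.unit.app (X ⨯ X) = g ≫ diag X ≫ adj.unit.app (X ⨯ X) := by
      apply BinaryFan.IsLimit.hom_ext hlim
      · have n1 := adj.unit.naturality (prod.fst : X ⨯ X ⟶ X)
        dsimp at n1 ⊢
        rw [Category.assoc, Category.assoc, Category.assoc, ← n1]
        erw [prod.lift_fst_assoc g h, prod.lift_fst_assoc (𝟙 X) (𝟙 X)]
        simp [p]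
      · have n2 := adj.unit.naturality (prod.snd : X ⨯ X ⟶ X)
        dsimp at n2 ⊢
        rw [Category.assoc, Category.assoc, Category.assoc, ← n2]
        erw [prod.lift_snd_assoc g h, prod.lift_snd_assoc (𝟙 X) (𝟙 X)]
        simp [p, hgh]
    -- the pullback of `ν` along `p` is initial
    have hscomm : (pullback.fst p ν ≫ g ≫ adj.unit.app X) ≫ (L ⋙ R).map (diag X)
        = (pullback.snd p ν ≫ adj.unit.app N) ≫ (L ⋙ R).map ν := by
      have nd := adj.unit.naturality (diag X)
      have nn := adj.unit.naturality ν
      dsimp at nd nn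
      rw [Category.assoc, Category.assoc]
      simp only [Functor.comp_map]
      rw [← nd, Category.assoc, ← nn, ← hkey]
      rw [← Category.assoc, pullback.condition, Category.assoc]
    have hPinit : IsInitial (pullback p ν) := by
      have l := hdisj.lift _ _ hscomm
      haveI : IsIso l := initialIsInitial.isIso_to l
      exact IsInitial.ofIso initialIsInitial (asIso l).symm
    -- van Kampen: the two pullbacks along `p` form a coproduct decomposition of `W`
    have hvk := FinitaryExtensive.vanKampen _ hc
    have hW : Nonempty (IsColimit (BinaryCofan.mk (pullback.fst p (diag X))
        (pullback.fst p ν))) := by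
      rw [(BinaryCofan.isVanKampen_iff _).mp hvk
        (BinaryCofan.mk (pullback.fst p (diag X)) (pullback.fst p ν))
        (pullback.snd p (diag X)) (pullback.snd p ν) p
        pullback.condition.symm pullback.condition.symm]
      exact ⟨IsPullback.of_hasPullback p (diag X), IsPullback.of_hasPullback p ν⟩
    have hiso : IsIso (pullback.fst p (diag X)) := by
      have := (BinaryCofan.isColimit_iff_isIso_inl hPinit _).mp hW
      exact this
    -- conclude `g = h`
    have hg : pullback.fst p (diag X) ≫ g = pullback.snd p (diag X) := by
      have := pullback.condition (f := p) (g := diag X)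
      have := congrArg (· ≫ (prod.fst : X ⨯ X ⟶ X)) this
      erw [Category.assoc, (prod.lift_fst g h : p ≫ prod.fst = _), Category.assoc, prod.lift_fst (𝟙 X) (𝟙 X)] at this
      simpa [p] using this
    have hh : pullback.fst p (diag X) ≫ h = pullback.snd p (diag X) := by
      have := pullback.condition (f := p) (g := diag X)
      have := congrArg (· ≫ (prod.snd : X ⨯ X ⟶ X)) this
      erw [Category.assoc, (prod.lift_snd g h : p ≫ prod.snd = _), Category.assoc, prod.lift_snd (𝟙 X) (𝟙 X)] at this
      simpa [p] using this
    rw [← cancel_epi (pullback.fst p (diag X)), hg, hh]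
  have := hsub (L.obj X) X (adj.unit.app X) hmono
  exact ⟨L.obj X, ⟨asIso (adj.unit.app X)⟩⟩
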